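/- arXiv:0906.0992 — 2 statements merged into one kernel-verified Lean document; each statement's English description precedes it below -/
import Mathlib

section
/- If β > 0 satisfies β λ'(β) − λ(β) > 2 (log b)/(s − 1), then strong disorder holds at β, i.e. W_∞(β) = 0 Q-almost surely. -/
open MeasureTheory ProbabilityTheory Real Filter Topology

namespace DiamondPolymer

/-- Addresses of the interior vertices of the diamond hierarchical lattices: a vertex of
generation `k` is addressed by a list of `k - 1` (branch, segment) choices together with a final
(branch, junction) choice. -/
abbrev GIdx (b s : ℕ) : Type := List (Fin b × Fin s) × (Fin b × Fin (s - 1))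

/-- Directed paths from `A` to `B` in `D n`: a path in `D (n+1)` chooses a branch of the
coarsest diamond and, for each of its `s` segments, a path in the corresponding copy of `D n`. -/
def PPath (b s : ℕ) : ℕ → Type
  | 0 => PUnit
  | n + 1 => Fin b × (Fin s → PPath b s n)

def PPathFintype (b s : ℕ) : ∀ n, Fintype (PPath b s n)
  | 0 => inferInstanceAs (Fintype PUnit)
  | n + 1 => letI := PPathFintype b s n
      inferInstanceAs (Fintype (Fin b × (Fin s → PPath b s n)))

instance (b s n : ℕ) : Fintype (PPath b s n) := PPathFintype b s n

def PPathDecEq (b s : ℕ) : ∀ n, DecidableEq (PPath b s n)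
  | 0 => inferInstanceAs (DecidableEq PUnit)
  | n + 1 => letI := PPathDecEq b s n
      inferInstanceAs (DecidableEq (Fin b × (Fin s → PPath b s n)))

instance (b s n : ℕ) : DecidableEq (PPath b s n) := PPathDecEq b s n

/-- The sum of the environment over the interior vertices visited by a path, where `pre` is the
address prefix of the copy of `D n` the path lives in. -/
def ham (b s : ℕ) (ω : GIdx b s → ℝ) : ∀ n, PPath b s n → List (Fin b × Fin s) → ℝ
  | 0, _, _ => 0
  | n + 1, g, pre =>
      let g' : Fin b × (Fin s → PPath b s n) := g
      (∑ j : Fin (s - 1), ω (pre, (g'.1, j))) +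
        ∑ j : Fin s, ham b s ω n (g'.2 j) (pre ++ [(g'.1, j)])

/-- The Hamiltonian `H_n(g) = ∑_{t=1}^{s^n - 1} ω(g_t)`. -/
def H (b s : ℕ) (ω : GIdx b s → ℝ) (n : ℕ) (g : PPath b s n) : ℝ := ham b s ω n g List.nil

/-- The partition function `Z_n(β) = ∑_{g ∈ Γ_n} exp (β H_n(g))`. -/
noncomputable def Z (b s : ℕ) (β : ℝ) (n : ℕ) (ω : GIdx b s → ℝ) : ℝ :=
  ∑ g : PPath b s n, Real.exp (β * H b s ω n g)

/-- The partition function as a random variable on the environment space. -/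
noncomputable def Zrv {b s : ℕ} {Ω : Type*} (ω : GIdx b s → Ω → ℝ) (β : ℝ) (n : ℕ) (x : Ω) : ℝ :=
  Z b s β n fun z => ω z x

/-- The normalized partition function `W_n(β) = Z_n(β) / Q[Z_n(β)]`. -/
noncomputable def Wrv {b s : ℕ} {Ω : Type*} [MeasurableSpace Ω] (Q : Measure Ω)
    (ω : GIdx b s → Ω → ℝ) (β : ℝ) (n : ℕ) (x : Ω) : ℝ :=
  Zrv ω β n x / ∫ y, Zrv ω β n y ∂Q

/-- The cumulant generating function `λ(β) = log Q[exp (β ω_0)]` of the marginal `μ`. -/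
noncomputable def lam (μ : Measure ℝ) (β : ℝ) : ℝ := Real.log (∫ x, Real.exp (β * x) ∂μ)

/-- The annealed free energy `f(β) = λ(β) + log b / (s - 1)`. -/
noncomputable def fann (b s : ℕ) (μ : Measure ℝ) (β : ℝ) : ℝ :=
  lam μ β + Real.log b / ((s : ℝ) - 1)

/-- The σ-algebra `F_n` generated by the environment of the first `n` generations. -/
def Fσ {b s : ℕ} {Ω : Type*} [MeasurableSpace Ω] (ω : GIdx b s → Ω → ℝ) (n : ℕ) :
    MeasurableSpace Ω :=
  ⨆ z : {z : GIdx b s // z.1.length < n}, MeasurableSpace.comap (ω z.1) inferInstance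

/-- Restriction of a path in `D (n+1)` to `D n` (forgetting the finest generation). -/
def coarsen (b s : ℕ) : ∀ n, PPath b s (n + 1) → PPath b s n
  | 0, _ => PUnit.unit
  | n + 1, g =>
      let g' : Fin b × (Fin s → PPath b s (n + 1)) := g
      (g'.1, fun j => coarsen b s n (g'.2 j))

/-- Restriction `g ↦ g|_m` of a path in `D (m + k)` to `D m`. -/
def down (b s m : ℕ) : ∀ k, PPath b s (m + k) → PPath b s m
  | 0, g => g
  | k + 1, g => down b s m k (coarsen b s (m + k) g)

/-- `μ_{m+k} (γ|_m = g)`, the polymer measure of the set of paths restricting to `g`. -/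
noncomputable def muRestr (b s : ℕ) (β : ℝ) (m k : ℕ) (g : PPath b s m)
    (ω : GIdx b s → ℝ) : ℝ :=
  (∑ g' : PPath b s (m + k),
      if down b s m k g' = g then Real.exp (β * H b s ω (m + k) g') else 0) /
    Z b s β (m + k) ω

/-- The sequence `(v_n)` of variances of `W_n`, as a dynamical system: `v_0 = 0`,
`v_{n+1} = (1/b) (e^{(s-1)γ} (v_n + 1)^s - 1)` where `γ = γ(β) = λ(2β) - 2λ(β)`. -/
noncomputable def vseq (b s : ℕ) (γ : ℝ) : ℕ → ℝ
  | 0 => 0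
  | n + 1 => (1 / (b : ℝ)) * (Real.exp (((s : ℝ) - 1) * γ) * (vseq b s γ n + 1) ^ s - 1)


open scoped NNReal ENNReal

/-- The set of interior vertices visited by a path. -/
def vset (b s : ℕ) : ∀ n, PPath b s n → List (Fin b × Fin s) → Finset (GIdx b s)
  | 0, _, _ => ∅
  | n + 1, g, pre =>
      let g' : Fin b × (Fin s → PPath b s n) := g
      (Finset.univ.image fun j : Fin (s - 1) => (pre, (g'.1, j))) ∪
        Finset.univ.biUnion fun j : Fin s => vset b s n (g'.2 j) (pre ++ [(g'.1, j)])

lemma vset_prefix (b s : ℕ) : ∀ n (g : PPath b s n) (pre : List (Fin b × Fin s))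
    (z : GIdx b s), z ∈ vset b s n g pre → pre <+: z.1
  | 0, _, _, _, hz => by simp [vset] at hz
  | n + 1, g, pre, z, hz => by
    rw [vset, Finset.mem_union] at hz
    rcases hz with hz | hz
    · simp only [Finset.mem_image] at hz
      obtain ⟨j, -, rfl⟩ := hz
      exact List.prefix_refl _
    · simp only [Finset.mem_biUnion] at hz
      obtain ⟨j, -, hj⟩ := hz
      exact ((pre.prefix_append _).trans (vset_prefix b s n _ _ _ hj))

lemma vset_length (b s : ℕ) : ∀ n (g : PPath b s n) (pre : List (Fin b × Fin s))
    (z : GIdx b s), z ∈ vset b s n g pre → pre.length ≤ z.1.length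
  | n, g, pre, z, hz => (vset_prefix b s n g pre z hz).length_le

lemma sum_vset_succ {M : Type*} [AddCommMonoid M] (b s : ℕ) (hs : 2 ≤ s)
    (F : GIdx b s → M) (n : ℕ)
    (g : Fin b × (Fin s → PPath b s n)) (pre : List (Fin b × Fin s)) :
    ∑ z ∈ vset b s (n + 1) g pre, F z =
      (∑ j : Fin (s - 1), F (pre, (g.1, j))) +
      ∑ j : Fin s, ∑ z ∈ vset b s n (g.2 j) (pre ++ [(g.1, j)]), F z := by
  have hdisj2 : ∀ j j' : Fin s, j ≠ j' →
      Disjoint (vset b s n (g.2 j) (pre ++ [(g.1, j)]))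
        (vset b s n (g.2 j') (pre ++ [(g.1, j')])) := by
    intro j j' hjj'
    rw [Finset.disjoint_left]
    intro z hz hz'
    have h1 := vset_prefix b s n _ _ _ hz
    have h2 := vset_prefix b s n _ _ _ hz'
    have h12 : pre ++ [(g.1, j)] = pre ++ [(g.1, j')] := by
      have hle : (pre ++ [(g.1, j)]).length ≤ (pre ++ [(g.1, j')]).length := by simp
      exact (List.prefix_of_prefix_length_le h1 h2 hle).eq_of_length (by simp)
    exact hjj' (by simpa using h12)
  show ∑ z ∈ (Finset.univ.image fun j : Fin (s - 1) => (pre, (g.1, j))) ∪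
        Finset.univ.biUnion fun j : Fin s => vset b s n (g.2 j) (pre ++ [(g.1, j)]), F z = _
  have hinj : ∀ j ∈ (Finset.univ : Finset (Fin (s-1))), ∀ j' ∈ Finset.univ,
      (fun j : Fin (s - 1) => ((pre, (g.1, j)) : GIdx b s)) j =
        (fun j : Fin (s - 1) => ((pre, (g.1, j)) : GIdx b s)) j' → j = j' := by
    intro j _ j' _ h
    simpa using h
  have hdisj : Disjoint (Finset.univ.image fun j : Fin (s - 1) => ((pre, (g.1, j)) : GIdx b s))
      (Finset.univ.biUnion fun j : Fin s => vset b s n (g.2 j) (pre ++ [(g.1, j)])) := by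
    rw [Finset.disjoint_left]
    intro z hz hz'
    simp only [Finset.mem_image] at hz
    obtain ⟨j, -, rfl⟩ := hz
    simp only [Finset.mem_biUnion] at hz'
    obtain ⟨j', -, hj'⟩ := hz'
    have := vset_length b s n _ _ _ hj'
    simp at this
  rw [Finset.sum_union hdisj, Finset.sum_image hinj,
    Finset.sum_biUnion (fun j _ j' _ h => hdisj2 j j' h)]


lemma ham_eq_sum (b s : ℕ) (hs : 2 ≤ s) (ω : GIdx b s → ℝ) :
    ∀ n (g : PPath b s n) (pre : List (Fin b × Fin s)),
      ham b s ω n g pre = ∑ z ∈ vset b s n g pre, ω z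
  | 0, g, pre => by simp [ham, vset]
  | n + 1, g, pre => by
    rw [sum_vset_succ b s hs ω n g pre]
    show (∑ j : Fin (s - 1), ω (pre, (g.1, j))) +
        ∑ j : Fin s, ham b s ω n (g.2 j) (pre ++ [(g.1, j)]) = _
    congr 1
    exact Finset.sum_congr rfl fun j _ => ham_eq_sum b s hs ω n (g.2 j) _

lemma card_vset (b s : ℕ) (hs : 2 ≤ s) :
    ∀ n (g : PPath b s n) (pre : List (Fin b × Fin s)),
      (vset b s n g pre).card = s ^ n - 1
  | 0, g, pre => by simp [vset]
  | n + 1, g, pre => by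
    have h2 : 1 ≤ s ^ n := Nat.one_le_pow _ _ (by omega)
    have key := sum_vset_succ b s hs (fun _ => (1 : ℕ)) n g pre
    have hch : ∀ j : Fin s, (∑ z ∈ vset b s n (g.2 j) (pre ++ [(g.1, j)]), (1 : ℕ))
        = s ^ n - 1 := fun j => by
      rw [← Finset.card_eq_sum_ones]; exact card_vset b s hs n (g.2 j) _
    simp only [hch, Finset.sum_const, Finset.card_univ, Fintype.card_fin, smul_eq_mul,
      mul_one] at key
    rw [key, pow_succ]
    have h3 : s * (s ^ n - 1) = s * s ^ n - s := by rw [Nat.mul_sub, mul_one]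
    have h4 : s ≤ s * s ^ n := Nat.le_mul_of_pos_right s (by omega)
    have h5 : s * s ^ n = s ^ n * s := mul_comm _ _
    rw [h3]
    omega

lemma H_eq_sum (b s : ℕ) (hs : 2 ≤ s) (ω : GIdx b s → ℝ) (n : ℕ) (g : PPath b s n) :
    H b s ω n g = ∑ z ∈ vset b s n g List.nil, ω z :=
  ham_eq_sum b s hs ω n g List.nil

instance ppath_nonempty (b s : ℕ) [NeZero b] [NeZero s] : ∀ n, Nonempty (PPath b s n)
  | 0 => ⟨PUnit.unit⟩
  | n + 1 =>
    have := ppath_nonempty b s n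
    ⟨(Classical.arbitrary (Fin b), fun _ => Classical.arbitrary (PPath b s n))⟩

lemma card_ppath_succ (b s n : ℕ) :
    Fintype.card (PPath b s (n + 1)) = b * Fintype.card (PPath b s n) ^ s := by
  have : Fintype.card (PPath b s (n + 1))
      = Fintype.card (Fin b × (Fin s → PPath b s n)) := by
    apply Fintype.card_congr
    exact Equiv.cast rfl
  rw [this]
  simp [Fintype.card_prod, Fintype.card_fun]

lemma card_ppath_pos (b s : ℕ) (hb : 2 ≤ b) (hs : 2 ≤ s) (n : ℕ) :
    0 < Fintype.card (PPath b s n) := by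
  have : NeZero b := ⟨by omega⟩
  have : NeZero s := ⟨by omega⟩
  exact Fintype.card_pos

/-- `(s-1) * log N_n = (s^n - 1) * log b`. -/
lemma log_card_ppath (b s : ℕ) (hb : 2 ≤ b) (hs : 2 ≤ s) : ∀ n : ℕ,
    ((s : ℝ) - 1) * Real.log (Fintype.card (PPath b s n))
      = ((s ^ n - 1 : ℕ) : ℝ) * Real.log b
  | 0 => by simp [show PPath b s 0 = PUnit from rfl]
  | n + 1 => by
    have hN := card_ppath_pos b s hb hs n
    have hrec := log_card_ppath b s hb hs n
    rw [card_ppath_succ]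
    push_cast [Nat.cast_sub (Nat.one_le_pow _ _ (by omega : 0 < s))]
    rw [Real.log_mul (by positivity) (by positivity), Real.log_pow]
    push_cast [Nat.cast_sub (Nat.one_le_pow _ _ (by omega : 0 < s))] at hrec
    ring_nf
    ring_nf at hrec
    nlinarith [hrec]


section Prob

variable {Ω : Type} [MeasurableSpace Ω] {Q : Measure Ω} [IsProbabilityMeasure Q]
  {μ : Measure ℝ} [IsProbabilityMeasure μ] {b s : ℕ}
  {ω : GIdx b s → Ω → ℝ}

lemma integral_exp_pos_of_integrable (t : ℝ) (h : Integrable (fun x => Real.exp (t * x)) μ) :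
    0 < ∫ x, Real.exp (t * x) ∂μ := by
  have := mgf_pos (X := id) (μ := μ) (t := t) h
  simpa [mgf, id] using this

lemma exp_lam_eq (t : ℝ) (h : Integrable (fun x => Real.exp (t * x)) μ) :
    Real.exp (lam μ t) = ∫ x, Real.exp (t * x) ∂μ :=
  Real.exp_log (integral_exp_pos_of_integrable t h)

lemma integrable_exp_omega (hmeas : ∀ z, Measurable (ω z))
    (hdist : ∀ z, Measure.map (ω z) Q = μ)
    (z : GIdx b s) (t : ℝ) (h : Integrable (fun x => Real.exp (t * x)) μ) :
    Integrable (fun x => Real.exp (t * ω z x)) Q := by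
  rw [← hdist z] at h
  exact (integrable_map_measure (Measurable.aestronglyMeasurable ((measurable_const_mul t).exp))
    (hmeas z).aemeasurable).mp h

lemma mgf_omega (hmeas : ∀ z, Measurable (ω z)) (hdist : ∀ z, Measure.map (ω z) Q = μ)
    (z : GIdx b s) (t : ℝ) :
    mgf (ω z) Q t = ∫ y, Real.exp (t * y) ∂μ := by
  show ∫ x, Real.exp (t * ω z x) ∂Q = _
  rw [← hdist z, integral_map (hmeas z).aemeasurable
    (Measurable.aestronglyMeasurable ((measurable_const_mul t).exp))]

lemma integrable_exp_H (hs : 2 ≤ s) (hmeas : ∀ z, Measurable (ω z))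
    (hindep : iIndepFun ω Q)
    (hdist : ∀ z, Measure.map (ω z) Q = μ)
    (n : ℕ) (g : PPath b s n) (t : ℝ) (h : Integrable (fun x => Real.exp (t * x)) μ) :
    Integrable (fun x => Real.exp (t * H b s (fun z => ω z x) n g)) Q := by
  have hrw : (fun x => Real.exp (t * H b s (fun z => ω z x) n g))
      = fun x => Real.exp (t * (∑ z ∈ vset b s n g List.nil, ω z) x) := by
    funext x
    rw [H_eq_sum b s hs _ n g, Finset.sum_apply]
  rw [hrw]
  exact hindep.integrable_exp_mul_sum hmeas
    (fun z _ => integrable_exp_omega hmeas hdist z t h)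

lemma integral_exp_H (hs : 2 ≤ s) (hmeas : ∀ z, Measurable (ω z))
    (hindep : iIndepFun ω Q)
    (hdist : ∀ z, Measure.map (ω z) Q = μ)
    (n : ℕ) (g : PPath b s n) (t : ℝ) (h : Integrable (fun x => Real.exp (t * x)) μ) :
    ∫ x, Real.exp (t * H b s (fun z => ω z x) n g) ∂Q
      = Real.exp (((s ^ n - 1 : ℕ) : ℝ) * lam μ t) := by
  have hrw : (fun x => Real.exp (t * H b s (fun z => ω z x) n g))
      = fun x => Real.exp (t * (∑ z ∈ vset b s n g List.nil, ω z) x) := by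
    funext x
    rw [H_eq_sum b s hs _ n g, Finset.sum_apply]
  rw [hrw]
  have : ∫ x, Real.exp (t * (∑ z ∈ vset b s n g List.nil, ω z) x) ∂Q
      = mgf (∑ z ∈ vset b s n g List.nil, ω z) Q t := rfl
  rw [this, iIndepFun.mgf_sum hindep hmeas]
  have hmg : ∀ z ∈ vset b s n g List.nil, mgf (ω z) Q t = Real.exp (lam μ t) := by
    intro z _
    rw [mgf_omega hmeas hdist z t, exp_lam_eq t h]
  rw [Finset.prod_congr rfl hmg, Finset.prod_const, card_vset b s hs n g List.nil,
    ← Real.exp_nat_mul]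

lemma integrable_Zrv (hs : 2 ≤ s) (hmeas : ∀ z, Measurable (ω z))
    (hindep : iIndepFun ω Q)
    (hdist : ∀ z, Measure.map (ω z) Q = μ)
    (n : ℕ) (t : ℝ) (h : Integrable (fun x => Real.exp (t * x)) μ) :
    Integrable (fun x => Zrv ω t n x) Q := by
  unfold Zrv Z
  exact integrable_finset_sum _ (fun g _ => integrable_exp_H hs hmeas hindep hdist n g t h)

lemma integral_Zrv (hs : 2 ≤ s) (hmeas : ∀ z, Measurable (ω z))
    (hindep : iIndepFun ω Q)
    (hdist : ∀ z, Measure.map (ω z) Q = μ)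
    (n : ℕ) (t : ℝ) (h : Integrable (fun x => Real.exp (t * x)) μ) :
    ∫ x, Zrv ω t n x ∂Q
      = (Fintype.card (PPath b s n) : ℝ) * Real.exp (((s ^ n - 1 : ℕ) : ℝ) * lam μ t) := by
  unfold Zrv Z
  rw [integral_finset_sum _ (fun g _ => integrable_exp_H hs hmeas hindep hdist n g t h)]
  rw [Finset.sum_congr rfl (fun g _ => integral_exp_H hs hmeas hindep hdist n g t h)]
  simp [Finset.card_univ, mul_comm]

end Prob


lemma nnreal_rpow_add_le (a c : ℝ≥0) {θ : ℝ} (h0 : 0 < θ) (h1 : θ ≤ 1) :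
    (a + c) ^ θ ≤ a ^ θ + c ^ θ := by
  have h := NNReal.rpow_add_rpow_le a c h0 h1
  simp only [NNReal.rpow_one, one_div_one] at h
  calc (a + c) ^ θ ≤ (((a ^ θ + c ^ θ) ^ (1 / θ)) : ℝ≥0) ^ θ :=
        NNReal.rpow_le_rpow h h0.le
    _ = a ^ θ + c ^ θ := by
        rw [← NNReal.rpow_mul, one_div, inv_mul_cancel₀ h0.ne', NNReal.rpow_one]

lemma real_rpow_add_le {a c : ℝ} (ha : 0 ≤ a) (hc : 0 ≤ c) {θ : ℝ} (h0 : 0 < θ)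
    (h1 : θ ≤ 1) : (a + c) ^ θ ≤ a ^ θ + c ^ θ := by
  have h := nnreal_rpow_add_le a.toNNReal c.toNNReal h0 h1
  have hcoe := NNReal.coe_le_coe.mpr h
  rw [← Real.toNNReal_add ha hc] at hcoe
  simpa [NNReal.coe_rpow, Real.coe_toNNReal _ (by positivity : (0:ℝ) ≤ a + c),
    Real.coe_toNNReal _ ha, Real.coe_toNNReal _ hc] using hcoe

lemma rpow_sum_le_sum_rpow {ι : Type*} (t : Finset ι) (f : ι → ℝ) (hf : ∀ i ∈ t, 0 ≤ f i)
    {θ : ℝ} (h0 : 0 < θ) (h1 : θ ≤ 1) :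
    (∑ i ∈ t, f i) ^ θ ≤ ∑ i ∈ t, f i ^ θ := by
  classical
  induction t using Finset.induction_on with
  | empty => simp [Real.zero_rpow h0.ne']
  | insert _ _ hi ih =>
    rename_i i t0
    have hfi : 0 ≤ f i := hf i (Finset.mem_insert_self _ _)
    have hft : ∀ j ∈ t0, 0 ≤ f j := fun j hj => hf j (Finset.mem_insert_of_mem hj)
    rw [Finset.sum_insert hi, Finset.sum_insert hi]
    calc (f i + ∑ j ∈ t0, f j) ^ θ ≤ f i ^ θ + (∑ j ∈ t0, f j) ^ θ :=
          real_rpow_add_le hfi (Finset.sum_nonneg hft) h0 h1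
      _ ≤ f i ^ θ + ∑ j ∈ t0, f j ^ θ := by gcongr; exact ih hft

section Deriv

variable {μ : Measure ℝ} [IsProbabilityMeasure μ]

lemma hasDerivAt_M (hmgf : ∀ t : ℝ, 0 < t → Integrable (fun x => Real.exp (t * x)) μ)
    {β : ℝ} (hβ : 0 < β) :
    ∃ D : ℝ, HasDerivAt (fun t => ∫ x, Real.exp (t * x) ∂μ) D β := by
  set bound : ℝ → ℝ := fun x => (2 / β) * (Real.exp (β / 4 * x) + Real.exp (5 * β / 4 * x)
    + Real.exp (3 * β / 4 * x) + Real.exp (7 * β / 4 * x)) with hbound_def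
  have hbound_int : Integrable bound μ := by
    apply Integrable.const_mul
    exact (((hmgf _ (by linarith)).add (hmgf _ (by linarith))).add
      (hmgf _ (by linarith))).add (hmgf _ (by linarith))
  have key := hasDerivAt_integral_of_dominated_loc_of_deriv_le
    (F := fun t x => Real.exp (t * x)) (F' := fun t x => x * Real.exp (t * x))
    (x₀ := β) (s := Metric.ball β (β / 4)) (bound := bound) (μ := μ) (Metric.ball_mem_nhds _ (by positivity))
    (Eventually.of_forall fun t =>
      (Measurable.aestronglyMeasurable ((measurable_const_mul t).exp)))
    (hmgf β hβ)
    ((measurable_id.mul ((measurable_const_mul β).exp)).aestronglyMeasurable)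
    ?_ hbound_int ?_
  · exact ⟨_, key.2⟩
  · refine Eventually.of_forall fun x t ht => ?_
    have htmem : β - β / 4 < t ∧ t < β + β / 4 := by
      rw [Metric.mem_ball, Real.dist_eq, abs_lt] at ht
      constructor <;> linarith
    rw [norm_mul, Real.norm_eq_abs, Real.norm_eq_abs, Real.abs_exp]
    have h1 : |x| ≤ (2 / β) * Real.exp (β / 2 * |x|) := by
      calc |x| = (2 / β) * (β / 2 * |x|) := by field_simp
        _ ≤ (2 / β) * Real.exp (β / 2 * |x|) := by
            apply mul_le_mul_of_nonneg_left _ (by positivity)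
            linarith [Real.add_one_le_exp (β / 2 * |x|)]
    calc |x| * Real.exp (t * x) ≤ (2 / β) * Real.exp (β / 2 * |x|) * Real.exp (t * x) :=
          mul_le_mul_of_nonneg_right h1 (Real.exp_pos _).le
      _ = (2 / β) * Real.exp (β / 2 * |x| + t * x) := by rw [mul_assoc, ← Real.exp_add]
      _ ≤ bound x := by
          rw [hbound_def]
          apply mul_le_mul_of_nonneg_left _ (by positivity)
          rcases le_or_gt 0 x with hx | hx
          · rw [abs_of_nonneg hx]
            have : β / 2 * x + t * x ≤ 7 * β / 4 * x := by nlinarith [htmem.1, htmem.2]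
            calc Real.exp (β / 2 * x + t * x) ≤ Real.exp (7 * β / 4 * x) :=
                  Real.exp_le_exp.mpr this
              _ ≤ _ := by
                  linarith [Real.exp_pos (β / 4 * x), Real.exp_pos (5 * β / 4 * x),
                    Real.exp_pos (3 * β / 4 * x), Real.exp_pos (7 * β / 4 * x)]
          · rw [abs_of_neg hx]
            have : β / 2 * (-x) + t * x ≤ β / 4 * x := by nlinarith [htmem.1, htmem.2]
            calc Real.exp (β / 2 * (-x) + t * x) ≤ Real.exp (β / 4 * x) :=
                  Real.exp_le_exp.mpr this
              _ ≤ _ := by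
                  linarith [Real.exp_pos (β / 4 * x), Real.exp_pos (5 * β / 4 * x),
                    Real.exp_pos (3 * β / 4 * x), Real.exp_pos (7 * β / 4 * x)]
  · refine Eventually.of_forall fun x t _ => ?_
    have : HasDerivAt (fun t : ℝ => t * x) x t := by
      simpa using (hasDerivAt_id t).mul_const x
    simpa [mul_comm] using this.exp

lemma differentiableAt_lam (hmgf : ∀ t : ℝ, 0 < t → Integrable (fun x => Real.exp (t * x)) μ)
    {β : ℝ} (hβ : 0 < β) : DifferentiableAt ℝ (lam μ) β := by
  obtain ⟨D, hD⟩ := hasDerivAt_M hmgf hβ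
  have hpos := integral_exp_pos_of_integrable β (hmgf β hβ)
  exact (hD.log hpos.ne').differentiableAt

end Deriv


section Main

variable {Ω : Type} [MeasurableSpace Ω] {Q : Measure Ω} [IsProbabilityMeasure Q]
  {μ : Measure ℝ} [IsProbabilityMeasure μ] {b s : ℕ} {ω : GIdx b s → Ω → ℝ}

lemma Zrv_pos (hb : 2 ≤ b) (hs : 2 ≤ s) (β : ℝ) (n : ℕ) (x : Ω) : 0 < Zrv ω β n x := by
  have : NeZero b := ⟨by omega⟩
  have : NeZero s := ⟨by omega⟩
  exact Finset.sum_pos (fun g _ => Real.exp_pos _) Finset.univ_nonempty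

lemma Zrv_nonneg (β : ℝ) (n : ℕ) (x : Ω) : 0 ≤ Zrv ω β n x :=
  Finset.sum_nonneg fun g _ => (Real.exp_pos _).le

lemma measurable_Zrv (hs : 2 ≤ s) (hmeas : ∀ z, Measurable (ω z)) (β : ℝ) (n : ℕ) :
    Measurable (fun x => Zrv ω β n x) := by
  unfold Zrv Z
  apply Finset.measurable_sum
  intro g _
  have : (fun x => Real.exp (β * H b s (fun z => ω z x) n g))
      = fun x => Real.exp (β * ∑ z ∈ vset b s n g List.nil, ω z x) := by
    funext x
    rw [H_eq_sum b s hs _ n g]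
  rw [this]
  exact ((Finset.measurable_sum _ fun z _ => (hmeas z)).const_mul β).exp

lemma Zrv_rpow_le (hs : 2 ≤ s) (β θ : ℝ) (hθ0 : 0 < θ) (hθ1 : θ ≤ 1) (n : ℕ) (x : Ω) :
    Zrv ω β n x ^ θ ≤ ∑ g : PPath b s n, Real.exp (θ * β * H b s (fun z => ω z x) n g) := by
  calc Zrv ω β n x ^ θ
      ≤ ∑ g : PPath b s n, Real.exp (β * H b s (fun z => ω z x) n g) ^ θ :=
        rpow_sum_le_sum_rpow _ _ (fun g _ => (Real.exp_pos _).le) hθ0 hθ1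
    _ = _ := Finset.sum_congr rfl fun g _ => by
        rw [← Real.exp_mul]; ring_nf

lemma integrable_sum_exp (hs : 2 ≤ s) (hmeas : ∀ z, Measurable (ω z))
    (hindep : iIndepFun ω Q)
    (hdist : ∀ z, Measure.map (ω z) Q = μ) (n : ℕ) (t : ℝ)
    (h : Integrable (fun x => Real.exp (t * x)) μ) :
    Integrable (fun x => ∑ g : PPath b s n,
      Real.exp (t * H b s (fun z => ω z x) n g)) Q :=
  integrable_finset_sum _ (fun g _ => integrable_exp_H hs hmeas hindep hdist n g t h)

lemma integrable_Zrv_rpow (hs : 2 ≤ s) (hmeas : ∀ z, Measurable (ω z))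
    (hindep : iIndepFun ω Q)
    (hdist : ∀ z, Measure.map (ω z) Q = μ) (β θ : ℝ) (hθ0 : 0 < θ) (hθ1 : θ ≤ 1) (n : ℕ)
    (hintθ : Integrable (fun x => Real.exp (θ * β * x)) μ) :
    Integrable (fun x => Zrv ω β n x ^ θ) Q := by
  refine (integrable_sum_exp hs hmeas hindep hdist n (θ * β) hintθ).mono'
    (((Real.continuous_rpow_const hθ0.le).measurable.comp (measurable_Zrv hs hmeas β n)).aestronglyMeasurable)
    (Eventually.of_forall fun x => ?_)
  rw [Real.norm_eq_abs, abs_of_nonneg (Real.rpow_nonneg (Zrv_nonneg β n x) θ)]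
  exact Zrv_rpow_le hs β θ hθ0 hθ1 n x

lemma integral_Zrv_rpow_le (hs : 2 ≤ s) (hmeas : ∀ z, Measurable (ω z))
    (hindep : iIndepFun ω Q)
    (hdist : ∀ z, Measure.map (ω z) Q = μ) (β θ : ℝ) (hθ0 : 0 < θ) (hθ1 : θ ≤ 1) (n : ℕ)
    (hintθ : Integrable (fun x => Real.exp (θ * β * x)) μ) :
    ∫ x, Zrv ω β n x ^ θ ∂Q ≤ (Fintype.card (PPath b s n) : ℝ) *
      Real.exp (((s ^ n - 1 : ℕ) : ℝ) * lam μ (θ * β)) := by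
  calc ∫ x, Zrv ω β n x ^ θ ∂Q
      ≤ ∫ x, ∑ g : PPath b s n, Real.exp (θ * β * H b s (fun z => ω z x) n g) ∂Q := by
        apply integral_mono_of_nonneg
        · exact Eventually.of_forall fun x => Real.rpow_nonneg
            (Finset.sum_nonneg fun g _ => (Real.exp_pos _).le) θ
        · exact integrable_sum_exp hs hmeas hindep hdist n (θ * β) hintθ
        · exact Eventually.of_forall fun x => Zrv_rpow_le hs β θ hθ0 hθ1 n x
    _ = ∑ g : PPath b s n, Real.exp (((s ^ n - 1 : ℕ) : ℝ) * lam μ (θ * β)) := by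
        rw [integral_finset_sum _
          (fun g _ => integrable_exp_H hs hmeas hindep hdist n g (θ * β) hintθ)]
        exact Finset.sum_congr rfl fun g _ =>
          integral_exp_H hs hmeas hindep hdist n g (θ * β) hintθ
    _ = _ := by simp [Finset.card_univ]

lemma frac_moment (hb : 2 ≤ b) (hs : 2 ≤ s) (hmeas : ∀ z, Measurable (ω z))
    (hindep : iIndepFun ω Q)
    (hdist : ∀ z, Measure.map (ω z) Q = μ) (β θ : ℝ) (hθ0 : 0 < θ) (hθ1 : θ ≤ 1)
    (hint1 : Integrable (fun x => Real.exp (β * x)) μ)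
    (hintθ : Integrable (fun x => Real.exp (θ * β * x)) μ) (n : ℕ) :
    ∫ x, Wrv Q ω β n x ^ θ ∂Q ≤ Real.exp (((s ^ n - 1 : ℕ) : ℝ) *
      ((1 - θ) * (Real.log b / ((s : ℝ) - 1)) + lam μ (θ * β) - θ * lam μ β)) := by
  set N : ℝ := (Fintype.card (PPath b s n) : ℝ) with hN_def
  have hN : 0 < N := by
    rw [hN_def]
    exact_mod_cast card_ppath_pos b s hb hs n
  set e : ℝ := ((s ^ n - 1 : ℕ) : ℝ) with he_def
  set L : ℝ := Real.log b / ((s : ℝ) - 1) with hL_def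
  have hc0 : ∫ y, Zrv ω β n y ∂Q = N * Real.exp (e * lam μ β) :=
    integral_Zrv hs hmeas hindep hdist n β hint1
  have hc0pos : 0 < N * Real.exp (e * lam μ β) := mul_pos hN (Real.exp_pos _)
  have hWrw : (fun x => Wrv Q ω β n x ^ θ)
      = fun x => Zrv ω β n x ^ θ / (N * Real.exp (e * lam μ β)) ^ θ := by
    funext x
    rw [Wrv, hc0, Real.div_rpow (Zrv_nonneg β n x) hc0pos.le]
  have hl : Real.log N = e * L := by
    have hkey := log_card_ppath b s hb hs n
    have hs1 : (0:ℝ) < (s : ℝ) - 1 := by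
      have : (2:ℝ) ≤ (s:ℝ) := by exact_mod_cast hs
      linarith
    rw [hL_def]
    field_simp
    linarith [hkey]
  rw [hWrw]
  rw [integral_div]
  rw [div_le_iff₀ (by positivity)]
  calc ∫ x, Zrv ω β n x ^ θ ∂Q
      ≤ N * Real.exp (e * lam μ (θ * β)) :=
        integral_Zrv_rpow_le hs hmeas hindep hdist β θ hθ0 hθ1 n hintθ
    _ = Real.exp (e * ((1 - θ) * L + lam μ (θ * β) - θ * lam μ β))
        * (N * Real.exp (e * lam μ β)) ^ θ := by
        rw [show N = Real.exp (Real.log N) from (Real.exp_log hN).symm]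
        rw [← Real.exp_add, ← Real.exp_add, ← Real.exp_mul, ← Real.exp_add]
        congr 1
        rw [hl]
        ring

lemma summable_bound (c : ℝ) (hc : c < 0) (hs : 2 ≤ s) :
    Summable (fun n : ℕ => Real.exp (((s ^ n - 1 : ℕ) : ℝ) * c)) := by
  refine Summable.of_nonneg_of_le (fun n => (Real.exp_pos _).le) (fun n => ?_)
    (summable_geometric_of_lt_one (Real.exp_pos c).le (Real.exp_lt_one_iff.mpr hc))
  · rw [← Real.exp_nat_mul]
    apply Real.exp_le_exp.mpr
    have hn : (n : ℝ) ≤ ((s ^ n - 1 : ℕ) : ℝ) := by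
      have : n < s ^ n := Nat.lt_pow_self (by omega)
      have : n ≤ s ^ n - 1 := by omega
      exact_mod_cast this
    nlinarith

end Main


theorem statement_8
    (b s : ℕ) (hb : 2 ≤ b) (hs : 2 ≤ s)
    {Ω : Type} [MeasurableSpace Ω] (Q : Measure Ω) [IsProbabilityMeasure Q]
    (μ : Measure ℝ) [IsProbabilityMeasure μ]
    (ω : GIdx b s → Ω → ℝ)
    (hmeas : ∀ z, Measurable (ω z))
    (hindep : iIndepFun ω Q)
    (hdist : ∀ z, Measure.map (ω z) Q = μ)
    (hmean : (∫ x, x ∂μ) = 0)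
    (hvar : (∫ x, x ^ 2 ∂μ) = 1)
    (hmgf : ∀ β : ℝ, 0 < β → Integrable (fun x => Real.exp (β * x)) μ)
    (β : ℝ) (hβ : 0 < β)
    (Winf : Ω → ℝ)
    (hW : ∀ᵐ x ∂Q, Tendsto (fun n : ℕ => Wrv Q ω β n x) atTop (𝓝 (Winf x)))
    (hcond : 2 * Real.log b / ((s : ℝ) - 1) < β * deriv (lam μ) β - lam μ β) :
    Winf =ᵐ[Q] 0 := by
  classical
  set L : ℝ := Real.log b / ((s : ℝ) - 1) with hL_def
  have hs1 : (0:ℝ) < (s:ℝ) - 1 := by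
    have : (2:ℝ) ≤ (s:ℝ) := by exact_mod_cast hs
    linarith
  have hlogb : 0 < Real.log b := Real.log_pos (by exact_mod_cast hb)
  have hL : 0 < L := div_pos hlogb hs1
  set D := deriv (lam μ) β with hD_def
  have hD : HasDerivAt (lam μ) D β := (differentiableAt_lam hmgf hβ).hasDerivAt
  set ψ : ℝ → ℝ := fun t => lam μ (t * β) - t * lam μ β + (1 - t) * L with hψ_def
  have hψ1 : ψ 1 = 0 := by simp [hψ_def]
  have hψd : HasDerivAt ψ (β * D - lam μ β - L) 1 := by
    have h1 : HasDerivAt (fun t : ℝ => t * β) β 1 := by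
      simpa using (hasDerivAt_id (1:ℝ)).mul_const β
    have hD' : HasDerivAt (lam μ) D ((1:ℝ) * β) := by rwa [one_mul]
    have h2 : HasDerivAt (fun t : ℝ => lam μ (t * β)) (D * β) 1 := by
      have hcmp := HasDerivAt.comp (x := (1:ℝ)) hD' h1
      exact hcmp
    have h3 : HasDerivAt (fun t : ℝ => t * lam μ β) (lam μ β) 1 := by
      simpa using (hasDerivAt_id (1:ℝ)).mul_const (lam μ β)
    have h4 : HasDerivAt (fun t : ℝ => (1 - t) * L) (-L) 1 := by
      simpa using ((hasDerivAt_const (1:ℝ) (1:ℝ)).sub (hasDerivAt_id 1)).mul_const L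
    have hcomb := (h2.sub h3).add h4
    rw [show β * D - lam μ β - L = D * β - lam μ β + -L by ring]
    exact hcomb
  have hψ'pos : 0 < β * D - lam μ β - L := by
    have h2L : 2 * Real.log b / ((s:ℝ) - 1) = 2 * L := by rw [hL_def]; ring
    rw [h2L] at hcond
    linarith
  have hslope : Tendsto (slope ψ 1) (𝓝[<] (1:ℝ)) (𝓝 (β * D - lam μ β - L)) :=
    (hasDerivAt_iff_tendsto_slope.mp hψd).mono_left
      (nhdsWithin_mono _ (fun y hy => ne_of_lt hy))
  have ev1 : ∀ᶠ t in 𝓝[<] (1:ℝ), 0 < slope ψ 1 t :=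
    hslope.eventually (eventually_gt_nhds hψ'pos)
  have ev2 : ∀ᶠ t in 𝓝[<] (1:ℝ), t ∈ Set.Ioo (0:ℝ) 1 :=
    Filter.eventually_of_mem
      (Ioo_mem_nhdsLT_of_mem (by constructor <;> norm_num : (1:ℝ) ∈ Set.Ioc 0 1))
      (fun t ht => ht)
  obtain ⟨θ, hθs, hθ0, hθ1⟩ := (ev1.and ev2).exists
  have hψθ : ψ θ < 0 := by
    rw [slope_def_field, hψ1, sub_zero] at hθs
    rcases div_pos_iff.mp hθs with ⟨h1, h2⟩ | ⟨h1, h2⟩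
    · linarith
    · linarith
  set c : ℝ := (1 - θ) * L + lam μ (θ * β) - θ * lam μ β with hc_def
  have hc : c < 0 := by
    have hψc : ψ θ = c := by rw [hψ_def, hc_def]; ring
    linarith [hψc ▸ hψθ]
  have hint1 := hmgf β hβ
  have hintθ := hmgf (θ * β) (mul_pos hθ0 hβ)
  have hbdd : ∀ n : ℕ, ∫ x, Wrv Q ω β n x ^ θ ∂Q
      ≤ Real.exp (((s ^ n - 1 : ℕ) : ℝ) * c) := fun n =>
    frac_moment hb hs hmeas hindep hdist β θ hθ0 hθ1.le hint1 hintθ n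
  have hZint_nn : ∀ n : ℕ, 0 ≤ ∫ y, Zrv ω β n y ∂Q := by
    intro n
    rw [integral_Zrv hs hmeas hindep hdist n β hint1]
    positivity
  have hWnn : ∀ (n : ℕ) (x : Ω), 0 ≤ Wrv Q ω β n x := fun n x =>
    div_nonneg (Zrv_nonneg β n x) (hZint_nn n)
  have hWmeas : ∀ n : ℕ, Measurable fun x => Wrv Q ω β n x := fun n =>
    (measurable_Zrv hs hmeas β n).div_const _
  have hfmeas : ∀ n : ℕ, Measurable fun x => Wrv Q ω β n x ^ θ := fun n =>
    (Real.continuous_rpow_const hθ0.le).measurable.comp (hWmeas n)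
  have hfint : ∀ n : ℕ, Integrable (fun x => Wrv Q ω β n x ^ θ) Q := by
    intro n
    have h1 := integrable_Zrv_rpow hs hmeas hindep hdist β θ hθ0 hθ1.le n hintθ
    have hrw : (fun x => Wrv Q ω β n x ^ θ)
        = fun x => Zrv ω β n x ^ θ * (((∫ y, Zrv ω β n y ∂Q) ^ θ)⁻¹) := by
      funext x
      rw [Wrv, Real.div_rpow (Zrv_nonneg β n x) (hZint_nn n), div_eq_mul_inv]
    rw [hrw]
    exact h1.mul_const _
  have hlint : ∫⁻ x, ∑' n : ℕ, ENNReal.ofReal (Wrv Q ω β n x ^ θ) ∂Q < ⊤ := by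
    rw [lintegral_tsum (fun n => ((hfmeas n).ennreal_ofReal).aemeasurable)]
    have hsum := summable_bound (s := s) c hc hs
    calc ∑' n : ℕ, ∫⁻ x, ENNReal.ofReal (Wrv Q ω β n x ^ θ) ∂Q
        ≤ ∑' n : ℕ, ENNReal.ofReal (Real.exp (((s ^ n - 1 : ℕ) : ℝ) * c)) := by
          apply ENNReal.tsum_le_tsum
          intro n
          rw [← ofReal_integral_eq_lintegral_ofReal (hfint n)
            (Eventually.of_forall fun x => Real.rpow_nonneg (hWnn n x) θ)]
          exact ENNReal.ofReal_le_ofReal (hbdd n)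
      _ = ENNReal.ofReal (∑' n : ℕ, Real.exp (((s ^ n - 1 : ℕ) : ℝ) * c)) :=
          (ENNReal.ofReal_tsum_of_nonneg (fun n => (Real.exp_pos _).le) hsum).symm
      _ < ⊤ := ENNReal.ofReal_lt_top
  have hae : ∀ᵐ x ∂Q, (∑' n : ℕ, ENNReal.ofReal (Wrv Q ω β n x ^ θ)) < ⊤ :=
    ae_lt_top (Measurable.ennreal_tsum (fun n => (hfmeas n).ennreal_ofReal)) hlint.ne
  filter_upwards [hW, hae] with x hx1 hx2
  have htend0 : Tendsto (fun n : ℕ => ENNReal.ofReal (Wrv Q ω β n x ^ θ)) atTop (𝓝 0) :=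
    ENNReal.tendsto_atTop_zero_of_tsum_ne_top hx2.ne
  have htendθ : Tendsto (fun n : ℕ => Wrv Q ω β n x ^ θ) atTop (𝓝 0) := by
    have h := (ENNReal.tendsto_toReal (by simp : (0:ℝ≥0∞) ≠ ⊤)).comp htend0
    simp only [ENNReal.toReal_zero] at h
    exact h.congr fun n => ENNReal.toReal_ofReal (Real.rpow_nonneg (hWnn n x) θ)
  have htendW : Tendsto (fun n : ℕ => Wrv Q ω β n x) atTop (𝓝 0) := by
    have hcont : ContinuousAt (fun y : ℝ => y ^ θ⁻¹) 0 :=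
      Real.continuousAt_rpow_const 0 θ⁻¹ (Or.inr (by positivity))
    have h := hcont.tendsto.comp htendθ
    rw [Real.zero_rpow (by positivity : θ⁻¹ ≠ 0)] at h
    refine h.congr fun n => ?_
    show (Wrv Q ω β n x ^ θ) ^ θ⁻¹ = Wrv Q ω β n x
    rw [← Real.rpow_mul (hWnn n x), mul_inv_cancel₀ hθ0.ne', Real.rpow_one]
  have hfin := tendsto_nhds_unique hx1 htendW
  simpa using hfin

end DiamondPolymer
end

section
/- Assume b < s. For every sufficiently small ε > 0 there exists a constant c_ε such that for every 0 < β ≤ 1, if n₀ = n₀(β, ε) denotes the smallest integer n with v_n ≥ ε, then n₀ ≥ 2 |log β| / (log s − log b) − c_ε. -/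
open MeasureTheory ProbabilityTheory Real Filter Topology

namespace DiamondPolymer

section Aux

private 
lemma exp_sub_one_le_mul (x : ℝ) : Real.exp x - 1 ≤ x * Real.exp x := by
  have h := Real.add_one_le_exp (-x)
  rw [Real.exp_neg] at h
  have hx := Real.exp_pos x
  have h2 : (-x + 1) * Real.exp x ≤ (Real.exp x)⁻¹ * Real.exp x :=
    mul_le_mul_of_nonneg_right h hx.le
  rw [inv_mul_cancel₀ hx.ne'] at h2
  nlinarith

lemma exp_le_quad (u : ℝ) : Real.exp u ≤ 1 + u + u ^ 2 * Real.exp (max u 0) := by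
  rcases le_or_gt u 0 with h | h
  · rw [max_eq_right h, Real.exp_zero, mul_one]
    have hx := Real.exp_pos u
    have h1 : Real.exp u * (1 - u) ≤ 1 := by
      have h' := Real.add_one_le_exp (-u)
      rw [Real.exp_neg] at h'
      have h2 : (-u + 1) * Real.exp u ≤ (Real.exp u)⁻¹ * Real.exp u :=
        mul_le_mul_of_nonneg_right h' hx.le
      rw [inv_mul_cancel₀ hx.ne'] at h2
      nlinarith
    have h2 : (1 : ℝ) ≤ (1 + u + u ^ 2) * (1 - u) := by nlinarith [sq_nonneg u]
    have h3 : (0 : ℝ) < 1 - u := by linarith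
    exact le_of_mul_le_mul_right (h1.trans h2) h3
  · rw [max_eq_left h.le]
    have h0 : 0 ≤ u ^ 2 / 2 + (1 + u) * Real.exp (-u) - 1 := by
      have hderiv : ∀ t : ℝ, HasDerivAt (fun t : ℝ => t ^ 2 / 2 + (1 + t) * Real.exp (-t) - 1)
          (t - t * Real.exp (-t)) t := by
        intro t
        have h1 : HasDerivAt (fun t : ℝ => t ^ 2 / 2) t t := by
          simpa using (hasDerivAt_pow 2 t).div_const 2
        have h2 : HasDerivAt (fun t : ℝ => Real.exp (-t)) (-Real.exp (-t)) t := by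
          simpa using ((hasDerivAt_id t).neg).exp
        have h3 : HasDerivAt (fun t : ℝ => (1 + t) * Real.exp (-t))
            ((0 + 1) * Real.exp (-t) + (1 + t) * -Real.exp (-t)) t := by
          exact (((hasDerivAt_const t (1 : ℝ)).add (hasDerivAt_id t)).mul h2)
        have h4 := (h1.add h3).sub_const 1
        refine h4.congr_deriv ?_
        ring
      have hmono : MonotoneOn (fun t : ℝ => t ^ 2 / 2 + (1 + t) * Real.exp (-t) - 1)
          (Set.Ici (0 : ℝ)) := by
        apply monotoneOn_of_deriv_nonneg (convex_Ici 0)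
        · exact fun t _ => ((hderiv t).continuousAt).continuousWithinAt
        · exact fun t _ => ((hderiv t).differentiableAt).differentiableWithinAt
        · intro t ht
          rw [interior_Ici] at ht
          rw [(hderiv t).deriv]
          have h1 : Real.exp (-t) ≤ 1 := by
            rw [show (1 : ℝ) = Real.exp 0 by simp]
            exact Real.exp_le_exp.2 (by simp [le_of_lt (Set.mem_Ioi.1 ht)])
          nlinarith [le_of_lt (Set.mem_Ioi.1 ht)]
      have := hmono (Set.self_mem_Ici) (Set.mem_Ici.2 h.le) h.le
      simpa using this
    have hprod : Real.exp (-u) * Real.exp u = 1 := by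
      rw [← Real.exp_add]; simp
    nlinarith [Real.exp_pos u, sq_nonneg u, mul_le_mul_of_nonneg_right h0 (Real.exp_pos u).le]


section VseqAux


variable {b s : ℕ} (hb : 2 ≤ b) (hs : 2 ≤ s) {γ : ℝ} (hγ : 0 ≤ γ)

include hb hs hγ

lemma vseq_nonneg : ∀ n, 0 ≤ vseq b s γ n := by
  intro n
  induction n with
  | zero => simp [vseq]
  | succ n ih =>
    have hbR : (0 : ℝ) < b := Nat.cast_pos.2 (by omega)
    have hsR : (2 : ℝ) ≤ s := by exact_mod_cast hs
    have hE : 1 ≤ Real.exp (((s : ℝ) - 1) * γ) :=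
      Real.one_le_exp (mul_nonneg (by linarith) hγ)
    have hP : (1 : ℝ) ≤ (vseq b s γ n + 1) ^ s := one_le_pow₀ (by linarith)
    show 0 ≤ (1 / (b : ℝ)) * (Real.exp (((s : ℝ) - 1) * γ) * (vseq b s γ n + 1) ^ s - 1)
    have : (1 : ℝ) ≤ Real.exp (((s : ℝ) - 1) * γ) * (vseq b s γ n + 1) ^ s := by nlinarith
    have h1 : (0 : ℝ) ≤ 1 / (b : ℝ) := by positivity
    nlinarith

lemma vseq_growth (n : ℕ) : (s : ℝ) / b * vseq b s γ n ≤ vseq b s γ (n + 1) := by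
  have ih := vseq_nonneg hb hs hγ n
  have hbR : (0 : ℝ) < b := Nat.cast_pos.2 (by omega)
  have hsR : (2 : ℝ) ≤ s := by exact_mod_cast hs
  set v := vseq b s γ n with hv
  have hE : 1 ≤ Real.exp (((s : ℝ) - 1) * γ) :=
    Real.one_le_exp (mul_nonneg (by linarith) hγ)
  have hBer : 1 + (s : ℝ) * v ≤ (v + 1) ^ s := by
    have := one_add_mul_le_pow (a := v) (by linarith) s
    calc 1 + (s : ℝ) * v ≤ (1 + v) ^ s := this
    _ = (v + 1) ^ s := by ring
  have hP : (0 : ℝ) ≤ (v + 1) ^ s := by positivity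
  have hEP : (v + 1) ^ s ≤ Real.exp (((s : ℝ) - 1) * γ) * (v + 1) ^ s :=
    le_mul_of_one_le_left hP hE
  have hkey : (s : ℝ) * v ≤ Real.exp (((s : ℝ) - 1) * γ) * (v + 1) ^ s - 1 := by linarith
  show (s : ℝ) / b * v ≤ (1 / (b : ℝ)) * (Real.exp (((s : ℝ) - 1) * γ) * (v + 1) ^ s - 1)
  rw [show (s : ℝ) / b * v = (1 / (b : ℝ)) * ((s : ℝ) * v) by ring]
  exact mul_le_mul_of_nonneg_left hkey (by positivity)

lemma vseq_sum : ∀ m : ℕ,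
    ((s : ℝ) / b - 1) * (∑ k ∈ Finset.range m, vseq b s γ k) ≤ vseq b s γ m := by
  intro m
  induction m with
  | zero => simp [vseq]
  | succ m ih =>
    have hg := vseq_growth hb hs hγ m
    have hv := vseq_nonneg hb hs hγ m
    rw [Finset.sum_range_succ]
    nlinarith

lemma vseq_succ_le' {G : ℝ} (hG : ((s : ℝ) - 1) * γ ≤ G) (k : ℕ) :
    vseq b s γ (k + 1) ≤ (1 / (b : ℝ)) * (Real.exp (G + s * vseq b s γ k) - 1) := by
  have hv0 := vseq_nonneg hb hs hγ k
  have hbR : (0 : ℝ) < b := Nat.cast_pos.2 (by omega)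
  set v := vseq b s γ k with hv
  have h1 : (v + 1) ^ s ≤ Real.exp ((s : ℝ) * v) := by
    have h2 : v + 1 ≤ Real.exp v := by linarith [Real.add_one_le_exp v]
    calc (v + 1) ^ s ≤ (Real.exp v) ^ s := pow_le_pow_left₀ (by linarith) h2 s
    _ = Real.exp ((s : ℝ) * v) := (Real.exp_nat_mul v s).symm
  have h3 : Real.exp (((s : ℝ) - 1) * γ) * (v + 1) ^ s ≤ Real.exp (G + s * v) := by
    calc Real.exp (((s : ℝ) - 1) * γ) * (v + 1) ^ s
        ≤ Real.exp G * Real.exp ((s : ℝ) * v) :=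
          mul_le_mul (Real.exp_le_exp.2 hG) h1 (by positivity) (Real.exp_pos G).le
    _ = Real.exp (G + s * v) := by rw [← Real.exp_add]
  show (1 / (b : ℝ)) * (Real.exp (((s : ℝ) - 1) * γ) * (v + 1) ^ s - 1) ≤ _
  apply mul_le_mul_of_nonneg_left _ (by positivity)
  linarith

lemma vseq_step (hbs : b < s) {G θ : ℝ} (hG : ((s : ℝ) - 1) * γ ≤ G) (hG0 : 0 ≤ G)
    (hθ : G * Real.exp (G + s) / ((b : ℝ) * ((s : ℝ) / b - 1)) ≤ θ)
    (k : ℕ) (hv1 : vseq b s γ k ≤ 1) :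
    vseq b s γ (k + 1) + θ ≤
      (s : ℝ) / b * Real.exp (G + s * vseq b s γ k) * (vseq b s γ k + θ) := by
  have hv0 := vseq_nonneg hb hs hγ k
  have hbR : (0 : ℝ) < b := Nat.cast_pos.2 (by omega)
  have hsR : (2 : ℝ) ≤ s := by exact_mod_cast hs
  have hbsR : (b : ℝ) < s := by exact_mod_cast hbs
  set r := (s : ℝ) / b with hr
  have hr1 : 1 < r := (one_lt_div hbR).2 hbsR
  set v := vseq b s γ k with hv
  set E := Real.exp (G + s * v) with hE
  have hE1 : 1 ≤ E := Real.one_le_exp (by nlinarith)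
  have hEmax : E ≤ Real.exp (G + s) := Real.exp_le_exp.2 (by nlinarith)
  have hsucc : vseq b s γ (k + 1) ≤ (1 / (b : ℝ)) * ((G + s * v) * E) := by
    refine (vseq_succ_le' hb hs hγ hG k).trans ?_
    apply mul_le_mul_of_nonneg_left _ (by positivity)
    exact exp_sub_one_le_mul (G + s * v)
  have hden : (0 : ℝ) < (b : ℝ) * (r - 1) := by nlinarith
  have hθ1 : G * E / ((b : ℝ) * (r - 1)) ≤ θ := by
    refine le_trans ((div_le_div_iff_of_pos_right hden).2 ?_) hθ
    exact mul_le_mul_of_nonneg_left hEmax hG0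
  have hθ0 : 0 ≤ θ := by
    refine le_trans ?_ hθ1
    exact div_nonneg (mul_nonneg hG0 (by positivity)) hden.le
  have hkey : G * E / b ≤ θ * (r * E - 1) := by
    have h1 : r - 1 ≤ r * E - 1 := by nlinarith
    have h2 : G * E / ((b : ℝ) * (r - 1)) * (r - 1) ≤ θ * (r * E - 1) :=
      mul_le_mul hθ1 h1 (by linarith) hθ0
    have h3 : G * E / ((b : ℝ) * (r - 1)) * (r - 1) = G * E / b := by
      rw [div_mul_eq_mul_div, mul_div_mul_right _ _ (show r - 1 ≠ 0 by linarith)]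
    linarith [h3 ▸ h2]
  have hexpand : (1 / (b : ℝ)) * ((G + s * v) * E) = G * E / b + r * (v * E) := by
    rw [hr]; field_simp
  have hEpos := Real.exp_pos (G + s * v)
  nlinarith [hsucc, hexpand ▸ hsucc]

lemma vseq_telescope (hbs : b < s) {G θ : ℝ} (hG : ((s : ℝ) - 1) * γ ≤ G) (hG0 : 0 ≤ G)
    (hθ : G * Real.exp (G + s) / ((b : ℝ) * ((s : ℝ) / b - 1)) ≤ θ)
    (m : ℕ) (hsm : ∀ k < m, vseq b s γ k ≤ 1) :
    vseq b s γ m + θ ≤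
      ((s : ℝ) / b) ^ m *
        Real.exp ((m : ℝ) * G + s * ∑ k ∈ Finset.range m, vseq b s γ k) * θ := by
  induction m with
  | zero => simp [vseq]
  | succ m ih =>
    have ih' := ih (fun k hk => hsm k (hk.trans (Nat.lt_succ_self m)))
    have hstep := vseq_step hb hs hγ hbs hG hG0 hθ m (hsm m (Nat.lt_succ_self m))
    have hpos : (0 : ℝ) ≤ (s : ℝ) / b * Real.exp (G + s * vseq b s γ m) := by positivity
    have harg : ((m + 1 : ℕ) : ℝ) * G + (s : ℝ) * ∑ k ∈ Finset.range (m + 1), vseq b s γ k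
        = (G + (s : ℝ) * vseq b s γ m) +
          ((m : ℝ) * G + (s : ℝ) * ∑ k ∈ Finset.range m, vseq b s γ k) := by
      rw [Finset.sum_range_succ]; push_cast; ring
    calc vseq b s γ (m + 1) + θ
        ≤ (s : ℝ) / b * Real.exp (G + s * vseq b s γ m) * (vseq b s γ m + θ) := hstep
      _ ≤ (s : ℝ) / b * Real.exp (G + s * vseq b s γ m) *
          (((s : ℝ) / b) ^ m *
            Real.exp ((m : ℝ) * G + s * ∑ k ∈ Finset.range m, vseq b s γ k) * θ) :=
          mul_le_mul_of_nonneg_left ih' hpos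
      _ = ((s : ℝ) / b) ^ (m + 1) *
          Real.exp (((m + 1 : ℕ) : ℝ) * G + s * ∑ k ∈ Finset.range (m + 1), vseq b s γ k) * θ := by
          have key : ∀ A B C D : ℝ, A * B * (C * D * θ) = C * A * (B * D) * θ := fun A B C D => by
            ring
          rw [harg, Real.exp_add (G + (s : ℝ) * vseq b s γ m)
            ((m : ℝ) * G + (s : ℝ) * ∑ k ∈ Finset.range m, vseq b s γ k), pow_succ]
          exact key _ _ _ _


end VseqAux

section MgfAux

open MeasureTheory

variable {μ : Measure ℝ} [IsProbabilityMeasure μ]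

private lemma int_sq (hvar : (∫ x, x ^ 2 ∂μ) = 1) : Integrable (fun x => x ^ 2) μ := by
  by_contra h
  rw [integral_undef h] at hvar
  norm_num at hvar

private lemma int_id (hvar : (∫ x, x ^ 2 ∂μ) = 1) : Integrable (fun x : ℝ => x) μ := by
  have h1 : Integrable (fun x : ℝ => (1 + x ^ 2) / 2) μ :=
    ((integrable_const 1).add (int_sq hvar)).div_const 2
  refine h1.mono' measurable_id.aestronglyMeasurable ?_
  filter_upwards with x
  rw [Real.norm_eq_abs]
  nlinarith [sq_nonneg (|x| - 1), sq_abs x, abs_nonneg x]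

private lemma int_dom (hvar : (∫ x, x ^ 2 ∂μ) = 1)
    (hmgf : ∀ β : ℝ, 0 < β → Integrable (fun x => Real.exp (β * x)) μ) :
    Integrable (fun x => x ^ 2 * (1 + Real.exp (2 * x))) μ := by
  have he3 : Integrable (fun x => Real.exp (3 * x)) μ := hmgf 3 (by norm_num)
  have hbig : Integrable (fun x => 2 * x ^ 2 + 4 * Real.exp (3 * x)) μ :=
    ((int_sq hvar).const_mul 2).add (he3.const_mul 4)
  refine hbig.mono' ?_ ?_
  · exact (Continuous.mul (by continuity) (by continuity)).aestronglyMeasurable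
  filter_upwards with x
  rw [Real.norm_eq_abs, abs_of_nonneg (by positivity)]
  rcases le_or_gt x 0 with hx0 | hx0
  · have h1 : Real.exp (2 * x) ≤ 1 := by
      rw [show (1 : ℝ) = Real.exp 0 by simp]
      exact Real.exp_le_exp.2 (by linarith)
    nlinarith [Real.exp_pos (3 * x), sq_nonneg x]
  · have h2 : x ^ 2 ≤ 4 * Real.exp x := by
      have h3 : x / 2 ≤ Real.exp (x / 2) := by linarith [Real.add_one_le_exp (x / 2)]
      have h4 : (x / 2) ^ 2 ≤ Real.exp (x / 2) ^ 2 :=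
        pow_le_pow_left₀ (by positivity) h3 2
      have h5 : Real.exp (x / 2) ^ 2 = Real.exp x := by
        rw [← Real.exp_nat_mul]; push_cast; ring_nf
      nlinarith
    have h6 : Real.exp (2 * x) * Real.exp x = Real.exp (3 * x) := by
      rw [← Real.exp_add]; ring_nf
    nlinarith [Real.exp_pos (2 * x), sq_nonneg x,
      mul_le_mul_of_nonneg_left h2 (Real.exp_pos (2 * x)).le]

private lemma M_ge_one (hvar : (∫ x, x ^ 2 ∂μ) = 1)
    (hmgf : ∀ β : ℝ, 0 < β → Integrable (fun x => Real.exp (β * x)) μ) :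
    1 ≤ ∫ x, x ^ 2 * (1 + Real.exp (2 * x)) ∂μ := by
  have h := integral_mono (int_sq hvar) (int_dom hvar hmgf)
    (fun x => by nlinarith [Real.exp_pos (2 * x), sq_nonneg x])
  rw [hvar] at h
  exact h

private lemma int_exp_ge_one (hmean : (∫ x, x ∂μ) = 0) (hvar : (∫ x, x ^ 2 ∂μ) = 1)
    (hmgf : ∀ β : ℝ, 0 < β → Integrable (fun x => Real.exp (β * x)) μ)
    {β : ℝ} (hβ : 0 < β) : 1 ≤ ∫ x, Real.exp (β * x) ∂μ := by
  have h1 : Integrable (fun x : ℝ => 1 + β * x) μ :=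
    (integrable_const 1).add ((int_id hvar).const_mul β)
  have h2 : (∫ x, (1 + β * x) ∂μ) = 1 := by
    rw [integral_add (integrable_const 1) ((int_id hvar).const_mul β), integral_const,
      integral_const_mul, hmean]
    simp
  rw [← h2]
  exact integral_mono h1 (hmgf β hβ) (fun x => by linarith [Real.add_one_le_exp (β * x)])

private lemma lam_nonneg (hmean : (∫ x, x ∂μ) = 0) (hvar : (∫ x, x ^ 2 ∂μ) = 1)
    (hmgf : ∀ β : ℝ, 0 < β → Integrable (fun x => Real.exp (β * x)) μ)
    {β : ℝ} (hβ : 0 < β) : 0 ≤ lam μ β :=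
  Real.log_nonneg (int_exp_ge_one hmean hvar hmgf hβ)

private lemma lam_two_le (hmean : (∫ x, x ∂μ) = 0) (hvar : (∫ x, x ^ 2 ∂μ) = 1)
    (hmgf : ∀ β : ℝ, 0 < β → Integrable (fun x => Real.exp (β * x)) μ)
    {β : ℝ} (hβ : 0 < β) (hβ1 : β ≤ 1) :
    lam μ (2 * β) ≤ 4 * (∫ x, x ^ 2 * (1 + Real.exp (2 * x)) ∂μ) * β ^ 2 := by
  set M := ∫ x, x ^ 2 * (1 + Real.exp (2 * x)) ∂μ with hM
  have hM1 := M_ge_one hvar hmgf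
  have hpt : ∀ x : ℝ, Real.exp (2 * β * x) ≤
      1 + 2 * β * x + 4 * β ^ 2 * (x ^ 2 * (1 + Real.exp (2 * x))) := by
    intro x
    have h1 := exp_le_quad (2 * β * x)
    have h2 : Real.exp (max (2 * β * x) 0) ≤ 1 + Real.exp (2 * x) := by
      rcases le_or_gt x 0 with hx0 | hx0
      · rw [max_eq_right (by nlinarith)]
        simp [Real.exp_pos (2 * x), (Real.exp_pos (2 * x)).le]
      · rw [max_eq_left (by nlinarith)]
        have : Real.exp (2 * β * x) ≤ Real.exp (2 * x) :=
          Real.exp_le_exp.2 (by nlinarith)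
        linarith [Real.exp_pos (2 * x)]
    have h3 : (2 * β * x) ^ 2 * Real.exp (max (2 * β * x) 0) ≤
        4 * β ^ 2 * (x ^ 2 * (1 + Real.exp (2 * x))) := by
      calc (2 * β * x) ^ 2 * Real.exp (max (2 * β * x) 0)
          ≤ (2 * β * x) ^ 2 * (1 + Real.exp (2 * x)) :=
            mul_le_mul_of_nonneg_left h2 (sq_nonneg _)
        _ = 4 * β ^ 2 * (x ^ 2 * (1 + Real.exp (2 * x))) := by ring
    linarith
  have ha : Integrable (fun x : ℝ => 1 + 2 * β * x) μ := by
    simpa using (integrable_const (1 : ℝ)).add ((int_id hvar).const_mul (2 * β))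
  have hrhs : Integrable
      (fun x => 1 + 2 * β * x + 4 * β ^ 2 * (x ^ 2 * (1 + Real.exp (2 * x)))) μ := by
    exact ha.add ((int_dom hvar hmgf).const_mul (4 * β ^ 2))
  have hint : (∫ x, Real.exp (2 * β * x) ∂μ) ≤ 1 + 4 * M * β ^ 2 := by
    have h4 := integral_mono (hmgf (2 * β) (by positivity)) hrhs hpt
    have h5 : (∫ x, (1 + 2 * β * x + 4 * β ^ 2 * (x ^ 2 * (1 + Real.exp (2 * x)))) ∂μ)
        = 1 + 4 * M * β ^ 2 := by
      rw [integral_add ha ((int_dom hvar hmgf).const_mul (4 * β ^ 2)),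
        integral_add (integrable_const 1) ((int_id hvar).const_mul (2 * β)),
        integral_const, integral_const_mul, integral_const_mul, hmean, ← hM]
      simp; ring
    linarith [h4, h5.symm.le]
  have hpos : (0 : ℝ) < ∫ x, Real.exp (2 * β * x) ∂μ := by
    have := int_exp_ge_one hmean hvar hmgf (β := 2 * β) (by positivity)
    linarith
  calc lam μ (2 * β) = Real.log (∫ x, Real.exp (2 * β * x) ∂μ) := rfl
    _ ≤ Real.log (1 + 4 * M * β ^ 2) := Real.log_le_log hpos hint
    _ ≤ 1 + 4 * M * β ^ 2 - 1 := Real.log_le_sub_one_of_pos (by nlinarith)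
    _ = 4 * M * β ^ 2 := by ring

private lemma gamma_nonneg (hmean : (∫ x, x ∂μ) = 0) (hvar : (∫ x, x ^ 2 ∂μ) = 1)
    (hmgf : ∀ β : ℝ, 0 < β → Integrable (fun x => Real.exp (β * x)) μ)
    {β : ℝ} (hβ : 0 < β) : 0 ≤ lam μ (2 * β) - 2 * lam μ β := by
  set f : ℝ → ℝ := fun x => Real.exp (β * x) with hf
  have hfint : Integrable f μ := hmgf β hβ
  have hsq : (fun x => f x ^ 2) = fun x => Real.exp (2 * β * x) := by
    funext x
    rw [hf]
    rw [← Real.exp_nat_mul]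
    norm_num; ring_nf
  have hf2 : Integrable (fun x => f x ^ 2) μ := by
    rw [hsq]; exact hmgf (2 * β) (by positivity)
  set c := ∫ x, f x ∂μ with hc
  have hc1 : 1 ≤ c := int_exp_ge_one hmean hvar hmgf hβ
  have hkey : c ^ 2 ≤ ∫ x, f x ^ 2 ∂μ := by
    have hnn : 0 ≤ ∫ x, (f x - c) ^ 2 ∂μ := integral_nonneg (fun x => sq_nonneg _)
    have hexpand : (fun x => (f x - c) ^ 2) = fun x => f x ^ 2 - 2 * c * f x + c ^ 2 := by
      funext x; ring
    have hsub : Integrable (fun x => f x ^ 2 - 2 * c * f x) μ := by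
      exact hf2.sub (hfint.const_mul (2 * c))
    rw [hexpand, integral_add hsub (integrable_const _),
      integral_sub hf2 (hfint.const_mul (2 * c)), integral_const_mul, integral_const, ← hc] at hnn
    simp at hnn
    nlinarith
  have h2 : 2 * lam μ β = Real.log (c ^ 2) := by
    rw [Real.log_pow]; norm_num [lam, hc, hf]
  have h3 : lam μ (2 * β) = Real.log (∫ x, f x ^ 2 ∂μ) := by
    rw [hsq]; rfl
  rw [h2, h3]
  have : Real.log (c ^ 2) ≤ Real.log (∫ x, f x ^ 2 ∂μ) :=
    Real.log_le_log (by positivity) hkey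
  linarith


end MgfAux

end Aux


private lemma beta_sq_log_le {β : ℝ} (hβ0 : 0 < β) (hβ1 : β ≤ 1) :
    β ^ 2 * |Real.log β| ≤ 1 := by
  have hlogneg : Real.log β ≤ 0 := Real.log_nonpos hβ0.le hβ1
  have habs : |Real.log β| = -Real.log β := abs_of_nonpos hlogneg
  have h2 : -Real.log β ≤ 1 / β - 1 := by
    have h3 := Real.log_le_sub_one_of_pos (show (0 : ℝ) < β⁻¹ by positivity)
    rw [Real.log_inv] at h3
    have h4 : β⁻¹ = 1 / β := by ring
    linarith [h4 ▸ h3]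
  rw [habs]
  have h3 : β ^ 2 * (-Real.log β) ≤ β ^ 2 * (1 / β - 1) :=
    mul_le_mul_of_nonneg_left h2 (by positivity)
  have h4 : β ^ 2 * (1 / β - 1) = β - β ^ 2 := by field_simp
  nlinarith

set_option maxHeartbeats 1000000 in
theorem statement_17
    (b s : ℕ) (hb : 2 ≤ b) (hs : 2 ≤ s)
    (μ : Measure ℝ) [IsProbabilityMeasure μ]
    (hmean : (∫ x, x ∂μ) = 0)
    (hvar : (∫ x, x ^ 2 ∂μ) = 1)
    (hmgf : ∀ β : ℝ, 0 < β → Integrable (fun x => Real.exp (β * x)) μ)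
    (hbs : b < s)
 :
    ∃ ε₁ : ℝ, 0 < ε₁ ∧ ∀ ε : ℝ, 0 < ε → ε ≤ ε₁ → ∃ c : ℝ,
      ∀ β : ℝ, 0 < β → β ≤ 1 → ∀ n : ℕ,
        ε ≤ vseq b s (lam μ (2 * β) - 2 * lam μ β) n →
        2 * |Real.log β| / (Real.log s - Real.log b) - c ≤ (n : ℝ) := by
  classical
  have hb0 : (0 : ℝ) < b := Nat.cast_pos.2 (by omega)
  have hs0 : (0 : ℝ) < s := Nat.cast_pos.2 (by omega)
  have hbsR : (b : ℝ) < s := by exact_mod_cast hbs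
  have hsR2 : (2 : ℝ) ≤ s := by exact_mod_cast hs
  set r : ℝ := (s : ℝ) / b with hr
  have hr1 : 1 < r := (one_lt_div hb0).2 hbsR
  have hD : 0 < Real.log r := Real.log_pos hr1
  have hlogr : Real.log r = Real.log s - Real.log b := Real.log_div hs0.ne' hb0.ne'
  clear_value r
  set M := ∫ x, x ^ 2 * (1 + Real.exp (2 * x)) ∂μ with hMdef
  have hM1 : 1 ≤ M := M_ge_one hvar hmgf
  set Kst : ℝ := ((s : ℝ) - 1) * (4 * M) with hKst
  have hKst1 : 4 ≤ Kst := by nlinarith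
  set L : ℝ := Kst + s with hL
  have hL0 : 0 ≤ L := by linarith
  set A : ℝ := Kst * Real.exp L / ((b : ℝ) * (r - 1)) with hA
  have hden : (0 : ℝ) < (b : ℝ) * (r - 1) := mul_pos hb0 (by linarith)
  have hApos : 0 < A := div_pos (mul_pos (by linarith) (Real.exp_pos L)) hden
  set S₀ : ℝ := (s : ℝ) * ((Real.exp L - 1) / b) / (r - 1) with hS₀
  set T₀ : ℝ := 2 * Kst / Real.log r with hT₀
  clear_value M Kst L A S₀ T₀
  refine ⟨1, one_pos, fun ε hε0 hε1 => ?_⟩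
  set c : ℝ := max 0 ((Real.log A + T₀ + S₀ - Real.log ε) / Real.log r) with hc
  have hc0 : 0 ≤ c := le_max_left _ _
  have hcD : Real.log A + T₀ + S₀ - Real.log ε ≤ c * Real.log r := by
    have h1 : (Real.log A + T₀ + S₀ - Real.log ε) / Real.log r ≤ c := le_max_right _ _
    calc Real.log A + T₀ + S₀ - Real.log ε
        = (Real.log A + T₀ + S₀ - Real.log ε) / Real.log r * Real.log r := by
          rw [div_mul_cancel₀ _ hD.ne']
      _ ≤ c * Real.log r := mul_le_mul_of_nonneg_right h1 hD.le
  clear_value c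
  refine ⟨c, fun β hβ0 hβ1 n hn => ?_⟩
  set γ := lam μ (2 * β) - 2 * lam μ β with hγdef
  have hγ0 : 0 ≤ γ := gamma_nonneg hmean hvar hmgf hβ0
  set G : ℝ := Kst * β ^ 2 with hG
  have hG0 : 0 < G := by
    rw [hG]
    exact mul_pos (by linarith) (by positivity)
  have hγG : ((s : ℝ) - 1) * γ ≤ G := by
    have h1 : γ ≤ 4 * M * β ^ 2 := by
      have h2 := lam_two_le hmean hvar hmgf hβ0 hβ1
      have h3 := lam_nonneg hmean hvar hmgf hβ0
      rw [hγdef, hMdef]; linarith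
    calc ((s : ℝ) - 1) * γ ≤ ((s : ℝ) - 1) * (4 * M * β ^ 2) :=
          mul_le_mul_of_nonneg_left h1 (by linarith)
      _ = G := by rw [hG, hKst]; ring
  set θ : ℝ := A * β ^ 2 with hθdef
  have hθpos : 0 < θ := by
    rw [hθdef]
    exact mul_pos hApos (by positivity)
  have hβsq : β ^ 2 ≤ 1 := by nlinarith
  have hGle : G ≤ Kst := by
    rw [hG]
    nlinarith [hKst1]
  have hθhyp : G * Real.exp (G + s) / ((b : ℝ) * (r - 1)) ≤ θ := by
    have h2 : Real.exp (G + s) ≤ Real.exp L := Real.exp_le_exp.2 (by rw [hL]; linarith)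
    have h1 : G * Real.exp (G + s) ≤ Kst * Real.exp L * β ^ 2 := by
      calc G * Real.exp (G + s) = β ^ 2 * (Kst * Real.exp (G + s)) := by rw [hG]; ring
        _ ≤ β ^ 2 * (Kst * Real.exp L) := by nlinarith [Real.exp_pos (G + (s : ℝ))]
        _ = Kst * Real.exp L * β ^ 2 := by ring
    calc G * Real.exp (G + s) / ((b : ℝ) * (r - 1))
        ≤ Kst * Real.exp L * β ^ 2 / ((b : ℝ) * (r - 1)) := by
          exact div_le_div_of_nonneg_right h1 hden.le
      _ = θ := by rw [hθdef, hA]; ring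
  clear_value γ G θ
  have hex : ∃ k, ε ≤ vseq b s γ k := ⟨n, hn⟩
  set m := Nat.find hex with hmdef
  have hm : ε ≤ vseq b s γ m := Nat.find_spec hex
  have hmn : m ≤ n := Nat.find_min' hex hn
  have hsm : ∀ k < m, vseq b s γ k ≤ 1 := fun k hk =>
    (le_of_lt (lt_of_not_ge (Nat.find_min hex hk))).trans hε1
  have hm1 : 1 ≤ m := by
    rcases Nat.eq_zero_or_pos m with h0 | h
    · exfalso
      rw [h0] at hm
      simp only [vseq] at hm
      linarith
    · exact h
  clear_value m
  have hθhyp' : G * Real.exp (G + (s : ℝ)) / ((b : ℝ) * ((s : ℝ) / (b : ℝ) - 1)) ≤ θ := by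
    rw [← hr]; exact hθhyp
  have hT := vseq_telescope hb hs hγ0 hbs hγG hG0.le hθhyp' m hsm
  rw [← hr] at hT
  set Sv := ∑ k ∈ Finset.range m, vseq b s γ k with hSv
  have hSv0 : 0 ≤ Sv :=
    Finset.sum_nonneg fun k _ => vseq_nonneg hb hs hγ0 k
  have hvm : vseq b s γ m ≤ (Real.exp L - 1) / b := by
    obtain ⟨m', hm'⟩ : ∃ m', m = m' + 1 := ⟨m - 1, by omega⟩
    have h1 := vseq_succ_le' hb hs hγ0 hγG m'
    have hvm' : vseq b s γ m' ≤ 1 := hsm m' (by omega)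
    rw [hm']
    have h2 : Real.exp (G + s * vseq b s γ m') ≤ Real.exp L := by
      apply Real.exp_le_exp.2
      rw [hL]
      nlinarith
    calc vseq b s γ (m' + 1)
        ≤ (1 / (b : ℝ)) * (Real.exp (G + s * vseq b s γ m') - 1) := h1
      _ ≤ (1 / (b : ℝ)) * (Real.exp L - 1) := by
          apply mul_le_mul_of_nonneg_left _ (by positivity)
          linarith
      _ = (Real.exp L - 1) / b := by ring
  have hSvle : (r - 1) * Sv ≤ vseq b s γ m := by
    have := vseq_sum hb hs hγ0 m
    rw [hr]
    exact this
  have hsSv : (s : ℝ) * Sv ≤ S₀ := by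
    rw [hS₀, le_div_iff₀ (by linarith : (0 : ℝ) < r - 1)]
    have hX : (r - 1) * Sv ≤ (Real.exp L - 1) / b := hSvle.trans hvm
    nlinarith
  clear_value Sv
  rcases le_or_gt (2 * |Real.log β|) ((m : ℝ) * Real.log r) with hcase | hcase
  · have h1 : 2 * |Real.log β| / Real.log r ≤ (m : ℝ) := (div_le_iff₀ hD).2 hcase
    have hnm : (m : ℝ) ≤ n := Nat.cast_le.2 hmn
    rw [← hlogr]
    linarith
  · have hββ : β ^ 2 * |Real.log β| ≤ 1 := beta_sq_log_le hβ0 hβ1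
    have hmG : (m : ℝ) * G ≤ T₀ := by
      have h5 : (m : ℝ) ≤ 2 * |Real.log β| / Real.log r := (le_div_iff₀ hD).2 hcase.le
      calc (m : ℝ) * G ≤ 2 * |Real.log β| / Real.log r * G := by
            apply mul_le_mul_of_nonneg_right h5 hG0.le
        _ = 2 * Kst / Real.log r * (β ^ 2 * |Real.log β|) := by
            rw [hG]; field_simp
        _ ≤ 2 * Kst / Real.log r * 1 := by
            apply mul_le_mul_of_nonneg_left hββ (div_nonneg (by linarith) hD.le)
        _ = T₀ := by rw [hT₀]; ring
    have hεle : ε ≤ r ^ m * Real.exp ((m : ℝ) * G + s * Sv) * θ := by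
      have h1 : vseq b s γ m ≤ vseq b s γ m + θ := by linarith
      exact hm.trans (h1.trans hT)
    have hlog : Real.log ε ≤
        (m : ℝ) * Real.log r + ((m : ℝ) * G + s * Sv) + (Real.log A + 2 * Real.log β) := by
      have h1 := Real.log_le_log hε0 hεle
      have hrm : (0 : ℝ) < r ^ m := pow_pos (by linarith) m
      rw [Real.log_mul (mul_pos hrm (Real.exp_pos _)).ne' hθpos.ne',
        Real.log_mul hrm.ne' (Real.exp_pos _).ne', Real.log_pow, Real.log_exp,
        hθdef, Real.log_mul hApos.ne' (by positivity), Real.log_pow] at h1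
      push_cast at h1
      linarith
    have hlogβ : Real.log β = -|Real.log β| := by
      rw [abs_of_nonpos (Real.log_nonpos hβ0.le hβ1)]; ring
    have hnm : (m : ℝ) ≤ n := Nat.cast_le.2 hmn
    rw [← hlogr, sub_le_iff_le_add, div_le_iff₀ hD]
    have hmr : (m : ℝ) * Real.log r ≤ (n : ℝ) * Real.log r :=
      mul_le_mul_of_nonneg_right hnm hD.le
    linarith only [hlog, hmG, hsSv, hlogβ, hcD, hmr]

end DiamondPolymer
end
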